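/- Let Ω > 0 and α, β ≥ 0, and set r = 1. Define p : ℕ³ → ℝ by p(n,0,0) = Ω^n/(n!·(e^Ω−1)) for integers n ≥ 1 and p(i,j,k) = 0 for all other states. Then p ≥ 0, ∑_{(i,j,k)∈ℕ³} p(i,j,k) = 1, and p satisfies the minimal-model stationary master equation. (The sole-survivor truncated Poisson distribution is stationary for the minimal model.) -/

import Mathlib

/-- Extension of `p : ℕ³ → ℝ` to `ℤ³`, vanishing whenever some coordinate is negative. -/
noncomputable def pext (p : ℕ → ℕ → ℕ → ℝ) (i j k : ℤ) : ℝ :=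
  if 0 ≤ i ∧ 0 ≤ j ∧ 0 ≤ k then p i.toNat j.toNat k.toNat else 0

/-- The stationary master equation of the minimal stochastic May–Leonard model
(parameters `r`, `Ω`, `α`, `β`). -/
noncomputable def MinME (r Ω α β : ℝ) (p : ℕ → ℕ → ℕ → ℝ) : Prop :=
  ∀ i j k : ℕ,
    r * (((i : ℝ) - 1) * pext p ((i : ℤ) - 1) j k
        + ((j : ℝ) - 1) * pext p i ((j : ℤ) - 1) k
        + ((k : ℝ) - 1) * pext p i j ((k : ℤ) - 1))
    + (1 / Ω) * (((i : ℝ) + 1) * ((i : ℝ) + α * (j : ℝ) + β * (k : ℝ)) * pext p ((i : ℤ) + 1) j k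
        + ((j : ℝ) + 1) * (β * (i : ℝ) + (j : ℝ) + α * (k : ℝ)) * pext p i ((j : ℤ) + 1) k
        + ((k : ℝ) + 1) * (α * (i : ℝ) + β * (j : ℝ) + (k : ℝ)) * pext p i j ((k : ℤ) + 1))
    - r * ((i : ℝ) + (j : ℝ) + (k : ℝ)) * pext p i j k
    - (1 / Ω) * ((i : ℝ) * ((i : ℝ) - 1 + α * (j : ℝ) + β * (k : ℝ))
        + (j : ℝ) * (β * (i : ℝ) + (j : ℝ) - 1 + α * (k : ℝ))
        + (k : ℝ) * (α * (i : ℝ) + β * (j : ℝ) + (k : ℝ) - 1)) * pext p i j k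
    = 0

/-- The sole-survivor truncated Poisson distribution is stationary for the minimal
model with `r = 1`. -/
theorem minimal_truncated_poisson_stationary
    (Ω α β : ℝ) (hΩ : 0 < Ω) (hα : 0 ≤ α) (hβ : 0 ≤ β)
    (p : ℕ → ℕ → ℕ → ℝ)
    (hp : ∀ i j k : ℕ,
      p i j k = if 1 ≤ i ∧ j = 0 ∧ k = 0 then
        Ω ^ i / ((Nat.factorial i : ℝ) * (Real.exp Ω - 1)) else 0) :
    (∀ i j k : ℕ, 0 ≤ p i j k) ∧
    HasSum (fun n : ℕ × ℕ × ℕ => p n.1 n.2.1 n.2.2) 1 ∧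
    MinME 1 Ω α β p := by
  have hC : (0:ℝ) < Real.exp Ω - 1 := by
    have := Real.exp_lt_exp.2 hΩ
    simp only [Real.exp_zero] at this
    linarith
  have hC' : Real.exp Ω - 1 ≠ 0 := ne_of_gt hC
  have hΩ' : Ω ≠ 0 := ne_of_gt hΩ
  refine ⟨?_, ?_, ?_⟩
  · -- nonnegativity
    intro i j k
    rw [hp]
    split_ifs with h
    · positivity
    · exact le_refl 0
  · -- HasSum
    have h1 : HasSum (fun n : ℕ => Ω ^ n / (n.factorial : ℝ)) (Real.exp Ω) := by
      rw [Real.exp_eq_exp_ℝ]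
      exact NormedSpace.expSeries_div_hasSum_exp Ω
    have h2 : HasSum (fun n : ℕ => Ω ^ n / (n.factorial : ℝ) - if n = 0 then 1 else 0)
        (Real.exp Ω - 1) := h1.sub (hasSum_ite_eq 0 1)
    have h3 : HasSum (fun n : ℕ => p n 0 0) 1 := by
      have h4 := h2.div_const (Real.exp Ω - 1)
      rw [div_self hC'] at h4
      convert h4 using 2 with n
      · rfl
      rw [hp]
      rcases Nat.eq_zero_or_pos n with hn | hn
      · subst hn; norm_num
      · rw [if_pos ⟨hn, rfl, rfl⟩, if_neg (by omega), sub_zero, div_div]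
    have hinj : Function.Injective (fun n : ℕ => ((n, 0, 0) : ℕ × ℕ × ℕ)) := by
      intro a b hab
      simpa using hab
    have := (Function.Injective.hasSum_iff hinj (f := fun n : ℕ × ℕ × ℕ => p n.1 n.2.1 n.2.2)
      (by
        intro x hx
        rcases x with ⟨a, b, c⟩
        simp only [Set.mem_range, not_exists] at hx
        show p a b c = 0
        rw [hp]
        by_cases hb : b = 0 ∧ c = 0
        · exact absurd (by simp [hb.1, hb.2]) (hx a)
        · rw [if_neg (by tauto)])).1 h3
    exact this
  · -- master equation
    have key : ∀ a b c : ℤ, pext p a b c =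
        if 1 ≤ a ∧ b = 0 ∧ c = 0 then
          Ω ^ a.toNat / ((Nat.factorial a.toNat : ℝ) * (Real.exp Ω - 1)) else 0 := by
      intro a b c
      unfold pext
      by_cases h : 0 ≤ a ∧ 0 ≤ b ∧ 0 ≤ c
      · rw [if_pos h, hp]
        by_cases h2 : 1 ≤ a ∧ b = 0 ∧ c = 0
        · rw [if_pos (by omega), if_pos h2]
        · rw [if_neg (by omega), if_neg h2]
      · rw [if_neg h, if_neg (by omega)]
    intro i j k
    simp only [key]
    have hf : ∀ n : ℕ, (Nat.factorial n : ℝ) ≠ 0 := fun n => by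
      exact_mod_cast Nat.factorial_ne_zero n
    by_cases hk : k = 0
    · subst hk
      by_cases hj : j = 0
      · subst hj
        -- axis case
        match i with
        | 0 =>
          norm_num
        | 1 =>
          norm_num [Nat.factorial, Int.toNat_natCast]
          field_simp
          simp only [show Int.toNat 2 = 2 from rfl]
          ring
        | (m+2) =>
          push_cast
          have c1 : (1:ℤ) ≤ (m:ℤ) + 2 - 1 := by omega
          have c2 : (1:ℤ) ≤ (m:ℤ) + 2 := by omega
          have c3 : (1:ℤ) ≤ (m:ℤ) + 2 + 1 := by omega
          have t1 : ((m:ℤ) + 2 - 1).toNat = m + 1 := by omega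
          have t2 : ((m:ℤ) + 2 + 1).toNat = m + 3 := by omega
          have t3 : ((m:ℤ) + 2).toNat = m + 2 := by omega
          simp only [c1, c2, c3, t1, t2, t3, true_and, and_true, if_true, if_false,
            show ¬((0:ℤ) - 1 = 0) by norm_num, show ¬((0:ℤ) + 1 = 0) by norm_num,
            false_and, and_false, eq_self_iff_true, if_neg, not_false_iff, ite_true, ite_false]
          have hf2 : (Nat.factorial (m+2) : ℝ) = (m+2) * Nat.factorial (m+1) := by
            push_cast [Nat.factorial_succ]; ring
          have hf3 : (Nat.factorial (m+3) : ℝ) = (m+3) * ((m+2) * Nat.factorial (m+1)) := by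
            push_cast [Nat.factorial_succ]; ring
          rw [hf2, hf3, pow_succ, pow_succ, pow_succ]
          field_simp
          ring
      · -- j ≠ 0, k = 0
        by_cases hj1 : j = 1
        · subst hj1
          norm_num
        · have hjz : ((j:ℤ)) ≠ 0 := by exact_mod_cast hj
          have hjz1 : ((j:ℤ)) - 1 ≠ 0 := fun h => hj1 (by omega)
          have hjz2 : ((j:ℤ)) + 1 ≠ 0 := by omega
          rw [if_neg (fun h => hjz h.2.1), if_neg (fun h => hjz1 h.2.1),
            if_neg (fun h => hjz h.2.1), if_neg (fun h => hjz h.2.1),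
            if_neg (fun h => hjz2 h.2.1), if_neg (fun h => hjz h.2.1),
            if_neg (fun h => hjz h.2.1)]
          ring
    · -- k ≠ 0
      by_cases hk1 : k = 1
      · subst hk1
        norm_num
      · have hkz : ((k:ℤ)) ≠ 0 := by exact_mod_cast hk
        have hkz1 : ((k:ℤ)) - 1 ≠ 0 := fun h => hk1 (by omega)
        have hkz2 : ((k:ℤ)) + 1 ≠ 0 := by omega
        rw [if_neg (fun h => hkz h.2.2), if_neg (fun h => hkz h.2.2),
          if_neg (fun h => hkz1 h.2.2), if_neg (fun h => hkz h.2.2),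
          if_neg (fun h => hkz h.2.2), if_neg (fun h => hkz2 h.2.2),
          if_neg (fun h => hkz h.2.2)]
        ring
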